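/- Let p, q be positive integers and α : (ZMod p) × (ZMod q) → ℝ a probability distribution with α(0,0) = 0. Let Q be the real matrix indexed by (ZMod p) × (ZMod q) given by Q = Σ_{(i,j)} α(i,j) (J_p^i ⊗ J_q^j) − I. Then for every (m,n) ≠ (0,0), the entry of the matrix exponential satisfies lim_{t → 0⁺} (exp(tQ))_{(0,0),(m,n)} / t = α(m,n); that is, the function t ↦ (exp(tQ))_{(0,0),(m,n)}/t tends to α(m,n) as t tends to 0 from the right. -/

import Mathlib

open Matrix Kronecker

noncomputable section

/-- The primary permutation (left-shift) matrix `J_p` over `ℝ`. -/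
def JmatR (p : ℕ) : Matrix (ZMod p) (ZMod p) ℝ :=
  Matrix.of fun i j => if j = i + 1 then 1 else 0

/-- The real Kraus operator `J_p^i ⊗ J_q^j`. -/
def KrR (p q : ℕ) [NeZero p] [NeZero q] (i : ZMod p) (j : ZMod q) :
    Matrix (ZMod p × ZMod q) (ZMod p × ZMod q) ℝ :=
  (JmatR p ^ i.val) ⊗ₖ (JmatR q ^ j.val)

attribute [local instance] Matrix.linftyOpNormedRing Matrix.linftyOpNormedAlgebra

lemma JmatR_pow (p : ℕ) [NeZero p] (k : ℕ) (i j : ZMod p) :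
    (JmatR p ^ k) i j = if j = i + k then 1 else 0 := by
  induction k generalizing i j with
  | zero => simp [Matrix.one_apply, eq_comm]
  | succ k ih =>
    rw [pow_succ, Matrix.mul_apply]
    simp only [ih]
    simp only [JmatR, Matrix.of_apply, ite_mul, one_mul, zero_mul]
    rw [Finset.sum_ite_eq' Finset.univ ((i : ZMod p) + (k : ZMod p))
      (fun x => if j = x + 1 then 1 else 0)]
    have hck : ((k + 1 : ℕ) : ZMod p) = (k : ZMod p) + 1 := by push_cast; ring
    rw [hck, ← add_assoc]
    simp

lemma KrR_apply (p q : ℕ) [NeZero p] [NeZero q] (i : ZMod p) (j : ZMod q)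
    (m : ZMod p) (n : ZMod q) :
    KrR p q i j (0, 0) (m, n) = if m = i ∧ n = j then 1 else 0 := by
  rw [KrR, Matrix.kroneckerMap_apply, JmatR_pow, JmatR_pow]
  simp [ZMod.natCast_val, ZMod.cast_id, ite_and]
  split <;> split <;> simp_all

theorem stmt14 (p q : ℕ) [NeZero p] [NeZero q]
    (α : ZMod p × ZMod q → ℝ) (hα : ∀ ij, 0 ≤ α ij)
    (hsum : ∑ ij : ZMod p × ZMod q, α ij = 1) (h0 : α (0, 0) = 0)
    (Q : Matrix (ZMod p × ZMod q) (ZMod p × ZMod q) ℝ)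
    (hQ : Q = (∑ ij : ZMod p × ZMod q, α ij • KrR p q ij.1 ij.2) - 1) :
    ∀ mn : ZMod p × ZMod q, mn ≠ (0, 0) →
      Filter.Tendsto (fun t : ℝ => NormedSpace.exp (t • Q) (0, 0) mn / t)
        (nhdsWithin 0 (Set.Ioi 0)) (nhds (α mn)) := by
  intro mn hmn
  -- Q (0,0) mn = α mn
  have hQentry : Q (0, 0) mn = α mn := by
    obtain ⟨m, n⟩ := mn
    have h1 : (1 : Matrix (ZMod p × ZMod q) (ZMod p × ZMod q) ℝ) (0, 0) (m, n) = 0 := by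
      rw [Matrix.one_apply_ne (Ne.symm hmn)]
    rw [hQ, Matrix.sub_apply, h1, sub_zero, Matrix.sum_apply]
    simp only [Matrix.smul_apply, KrR_apply, smul_eq_mul, mul_ite, mul_one, mul_zero]
    have hiff : ∀ x : ZMod p × ZMod q, (m = x.1 ∧ n = x.2) ↔ (m, n) = x := by
      intro x; constructor
      · rintro ⟨h1, h2⟩; exact Prod.ext h1 h2
      · rintro rfl; exact ⟨rfl, rfl⟩
    simp only [hiff]
    rw [Finset.sum_ite_eq]
    simp
  -- derivative of exp at 0
  have hd : HasDerivAt (fun t : ℝ => NormedSpace.exp (t • Q) (0, 0) mn)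
      (Q (0, 0) mn) 0 := by
    have := hasDerivAt_exp_smul_const (𝕂 := ℝ) Q 0
    rw [zero_smul, NormedSpace.exp_zero, one_mul] at this
    have heval := this.hasFDerivAt
    have : HasDerivAt (fun t : ℝ =>
        (Matrix.entryLinearMap ℝ ℝ ((0 : ZMod p), (0 : ZMod q)) mn)
          (NormedSpace.exp (t • Q))) ((Matrix.entryLinearMap ℝ ℝ
          ((0 : ZMod p), (0 : ZMod q)) mn) Q) 0 := by
      exact (Matrix.entryLinearMap ℝ ℝ _ mn).toContinuousLinearMap.hasFDerivAt.comp_hasDerivAt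
        0 (hasDerivAt_exp_smul_const (𝕂 := ℝ) Q 0 |>.congr_deriv
          (by rw [zero_smul, NormedSpace.exp_zero, one_mul]))
    exact this
  have hf0 : NormedSpace.exp ((0 : ℝ) • Q) (0, 0) mn = 0 := by
    rw [zero_smul, NormedSpace.exp_zero, Matrix.one_apply_ne (Ne.symm hmn)]
  rw [← hQentry]
  have hslope := hasDerivAt_iff_tendsto_slope.mp hd
  have hmono : nhdsWithin (0 : ℝ) (Set.Ioi 0) ≤ nhdsWithin 0 {0}ᶜ :=
    nhdsWithin_mono 0 (fun x hx => ne_of_gt hx)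
  refine (hslope.mono_left hmono).congr fun t => ?_
  have h1 : (1 : Matrix (ZMod p × ZMod q) (ZMod p × ZMod q) ℝ) 0 mn = 0 :=
    Matrix.one_apply_ne' (by simpa [Prod.mk_zero_zero] using hmn)
  simp [slope_def_field, h1, Prod.mk_zero_zero]
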